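/- Let N ≥ 1, let K_1, …, K_N be nonempty finite sets, let 𝒮 be a collection of subsets of {1,…,N}, and for each S ∈ 𝒮 let p_S be a probability distribution on Π_{s∈S} K_s. Then the following are equivalent: (1) there exists a probability distribution p on K_1 × ⋯ × K_N whose marginal on each S ∈ 𝒮 equals p_S; (2) there exist a finite set Λ, a probability distribution μ on Λ, and outcome-deterministic response functions ξ_i : K_i × Λ → {0,1} with Σ_{k∈K_i} ξ_i(k,λ) = 1 for all i and λ, such that for every S ∈ 𝒮 and every outcome tuple (k_s)_{s∈S}, p_S((k_s)_{s∈S}) = Σ_{λ∈Λ} μ(λ) Π_{s∈S} ξ_s(k_s,λ); (3) the same as (2) except the response functions are allowed to be outcome-indeterministic, ξ_i : K_i × Λ → [0,1] with Σ_{k∈K_i} ξ_i(k,λ) = 1. (Fine's theorem adapted to noncontextual models: a KS-noncontextual model exists iff a measurement-noncontextual factorizable model exists iff a global joint distribution exists.) -/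
import Mathlib

open scoped BigOperators

private lemma prod_indicator_eq {ι : Type*} [Fintype ι] (P : ι → Prop) [DecidablePred P] :
    (∏ i, if P i then (1 : ℝ) else 0) = if ∀ i, P i then 1 else 0 := by
  by_cases h : ∀ i, P i
  · simp [h]
  · rw [if_neg h]
    push_neg at h
    obtain ⟨i, hi⟩ := h
    exact Finset.prod_eq_zero (Finset.mem_univ i) (by simp [hi])

private lemma marg_lemma (N : ℕ) (K : Fin N → Type*) [∀ i, Fintype (K i)]
    [∀ i, DecidableEq (K i)] (S : Finset (Fin N)) (g : (i : S) → K i.1)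
    (w : (i : Fin N) → K i → ℝ) (hw : ∀ i, ∑ k, w i k = 1) :
    ∑ f ∈ Finset.univ.filter (fun f : (i : Fin N) → K i => ∀ i : S, f i.1 = g i),
        ∏ i, w i (f i) = ∏ i : S, w i.1 (g i) := by
  classical
  set v : (i : Fin N) → K i → ℝ :=
    fun i k => if h : i ∈ S then (if k = g ⟨i, h⟩ then w i k else 0) else w i k with hv
  have key : ∑ f : (i : Fin N) → K i, ∏ i, v i (f i) = ∏ i, ∑ k, v i k :=
    (Fintype.prod_sum v).symm
  have lhs_eq : ∑ f ∈ Finset.univ.filter (fun f : (i : Fin N) → K i => ∀ i : S, f i.1 = g i),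
      ∏ i, w i (f i) = ∑ f : (i : Fin N) → K i, ∏ i, v i (f i) := by
    rw [Finset.sum_filter]
    refine Finset.sum_congr rfl fun f _ => ?_
    by_cases hf : ∀ i : S, f i.1 = g i
    · rw [if_pos hf]
      refine Finset.prod_congr rfl fun i _ => ?_
      by_cases hi : i ∈ S
      · simp [hv, hi, hf ⟨i, hi⟩]
      · simp [hv, hi]
    · rw [if_neg hf]
      push_neg at hf
      obtain ⟨i, hi⟩ := hf
      refine (Finset.prod_eq_zero (Finset.mem_univ i.1) ?_).symm
      simp [hv, i.2, hi]
  have col : ∀ i, (∑ k, v i k) = if h : i ∈ S then w i (g ⟨i, h⟩) else 1 := by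
    intro i
    by_cases hi : i ∈ S
    · simp only [hv, dif_pos hi]
      rw [Finset.sum_ite_eq' Finset.univ (g ⟨i, hi⟩) (w i)]
      simp
    · simp only [hv, dif_neg hi]
      exact hw i
  rw [lhs_eq, key]
  have : ∏ i, (∑ k, v i k) = ∏ i, (if h : i ∈ S then w i (g ⟨i, h⟩) else 1) :=
    Finset.prod_congr rfl fun i _ => col i
  rw [this]
  rw [← Finset.prod_subset (Finset.subset_univ S) (fun i _ hi => dif_neg hi)]
  rw [← Finset.prod_attach S (fun i => if h : i ∈ S then w i (g ⟨i, h⟩) else 1),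
    Finset.univ_eq_attach]
  refine Finset.prod_congr rfl fun i _ => ?_
  rw [dif_pos i.2]

theorem fine_theorem_for_noncontextual_models
    (N : ℕ) (hN : 1 ≤ N) (K : Fin N → Type*)
    [∀ i, Fintype (K i)] [∀ i, DecidableEq (K i)] [∀ i, Nonempty (K i)]
    (𝒮 : Set (Finset (Fin N)))
    (p : (S : Finset (Fin N)) → ((i : S) → K i.1) → ℝ)
    (hp : ∀ S ∈ 𝒮, (∀ g, 0 ≤ p S g) ∧ ∑ g, p S g = 1) :
    ((∃ q : ((i : Fin N) → K i) → ℝ,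
        (∀ f, 0 ≤ q f) ∧ (∑ f, q f = 1) ∧
        ∀ S ∈ 𝒮, ∀ g : (i : S) → K i.1,
          p S g = ∑ f ∈ Finset.univ.filter (fun f => ∀ i : S, f i.1 = g i), q f) ↔
      (∃ (m : ℕ) (μ : Fin m → ℝ) (ξ : (i : Fin N) → K i → Fin m → ℝ),
        (∀ l, 0 ≤ μ l) ∧ (∑ l, μ l = 1) ∧
        (∀ i k l, ξ i k l = 0 ∨ ξ i k l = 1) ∧
        (∀ i l, ∑ k, ξ i k l = 1) ∧
        ∀ S ∈ 𝒮, ∀ g : (i : S) → K i.1,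
          p S g = ∑ l, μ l * ∏ i : S, ξ i.1 (g i) l)) ∧
    ((∃ (m : ℕ) (μ : Fin m → ℝ) (ξ : (i : Fin N) → K i → Fin m → ℝ),
        (∀ l, 0 ≤ μ l) ∧ (∑ l, μ l = 1) ∧
        (∀ i k l, ξ i k l = 0 ∨ ξ i k l = 1) ∧
        (∀ i l, ∑ k, ξ i k l = 1) ∧
        ∀ S ∈ 𝒮, ∀ g : (i : S) → K i.1,
          p S g = ∑ l, μ l * ∏ i : S, ξ i.1 (g i) l) ↔
      (∃ (m : ℕ) (μ : Fin m → ℝ) (ξ : (i : Fin N) → K i → Fin m → ℝ),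
        (∀ l, 0 ≤ μ l) ∧ (∑ l, μ l = 1) ∧
        (∀ i k l, 0 ≤ ξ i k l ∧ ξ i k l ≤ 1) ∧
        (∀ i l, ∑ k, ξ i k l = 1) ∧
        ∀ S ∈ 𝒮, ∀ g : (i : S) → K i.1,
          p S g = ∑ l, μ l * ∏ i : S, ξ i.1 (g i) l)) := by
  classical
  -- (1) → (2)
  have h12 : (∃ q : ((i : Fin N) → K i) → ℝ,
        (∀ f, 0 ≤ q f) ∧ (∑ f, q f = 1) ∧
        ∀ S ∈ 𝒮, ∀ g : (i : S) → K i.1,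
          p S g = ∑ f ∈ Finset.univ.filter (fun f => ∀ i : S, f i.1 = g i), q f) →
      (∃ (m : ℕ) (μ : Fin m → ℝ) (ξ : (i : Fin N) → K i → Fin m → ℝ),
        (∀ l, 0 ≤ μ l) ∧ (∑ l, μ l = 1) ∧
        (∀ i k l, ξ i k l = 0 ∨ ξ i k l = 1) ∧
        (∀ i l, ∑ k, ξ i k l = 1) ∧
        ∀ S ∈ 𝒮, ∀ g : (i : S) → K i.1,
          p S g = ∑ l, μ l * ∏ i : S, ξ i.1 (g i) l) := by
    rintro ⟨q, hq0, hq1, hqm⟩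
    refine ⟨Fintype.card ((i : Fin N) → K i), fun l => q ((Fintype.equivFin _).symm l),
      fun i k l => if ((Fintype.equivFin _).symm l) i = k then 1 else 0,
      fun l => hq0 _, ?_, fun i k l => by by_cases h : ((Fintype.equivFin _).symm l) i = k <;>
        simp [h], fun i l => by rw [Finset.sum_ite_eq]; simp, ?_⟩
    · rw [← hq1]
      exact Fintype.sum_equiv (Fintype.equivFin _).symm _ _ (fun l => rfl)
    · intro S hS g
      rw [hqm S hS g]
      rw [Fintype.sum_equiv (Fintype.equivFin ((i : Fin N) → K i)).symm
        _ (fun f => q f * ∏ i : S, if f i.1 = g i then (1:ℝ) else 0) (fun l => rfl)]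
      rw [Finset.sum_filter]
      refine Finset.sum_congr rfl fun f _ => ?_
      rw [prod_indicator_eq (fun i : S => f i.1 = g i)]
      by_cases h : ∀ i : S, f i.1 = g i <;> simp [h]
  -- (2) → (3)
  have h23 : (∃ (m : ℕ) (μ : Fin m → ℝ) (ξ : (i : Fin N) → K i → Fin m → ℝ),
        (∀ l, 0 ≤ μ l) ∧ (∑ l, μ l = 1) ∧
        (∀ i k l, ξ i k l = 0 ∨ ξ i k l = 1) ∧
        (∀ i l, ∑ k, ξ i k l = 1) ∧
        ∀ S ∈ 𝒮, ∀ g : (i : S) → K i.1,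
          p S g = ∑ l, μ l * ∏ i : S, ξ i.1 (g i) l) →
      (∃ (m : ℕ) (μ : Fin m → ℝ) (ξ : (i : Fin N) → K i → Fin m → ℝ),
        (∀ l, 0 ≤ μ l) ∧ (∑ l, μ l = 1) ∧
        (∀ i k l, 0 ≤ ξ i k l ∧ ξ i k l ≤ 1) ∧
        (∀ i l, ∑ k, ξ i k l = 1) ∧
        ∀ S ∈ 𝒮, ∀ g : (i : S) → K i.1,
          p S g = ∑ l, μ l * ∏ i : S, ξ i.1 (g i) l) := by
    rintro ⟨m, μ, ξ, h0, h1, h01, hsum, hm⟩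
    exact ⟨m, μ, ξ, h0, h1, fun i k l => by rcases h01 i k l with h | h <;> simp [h],
      hsum, hm⟩
  -- (3) → (1)
  have h31 : (∃ (m : ℕ) (μ : Fin m → ℝ) (ξ : (i : Fin N) → K i → Fin m → ℝ),
        (∀ l, 0 ≤ μ l) ∧ (∑ l, μ l = 1) ∧
        (∀ i k l, 0 ≤ ξ i k l ∧ ξ i k l ≤ 1) ∧
        (∀ i l, ∑ k, ξ i k l = 1) ∧
        ∀ S ∈ 𝒮, ∀ g : (i : S) → K i.1,
          p S g = ∑ l, μ l * ∏ i : S, ξ i.1 (g i) l) →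
      (∃ q : ((i : Fin N) → K i) → ℝ,
        (∀ f, 0 ≤ q f) ∧ (∑ f, q f = 1) ∧
        ∀ S ∈ 𝒮, ∀ g : (i : S) → K i.1,
          p S g = ∑ f ∈ Finset.univ.filter (fun f => ∀ i : S, f i.1 = g i), q f) := by
    rintro ⟨m, μ, ξ, h0, h1, h01, hsum, hm⟩
    refine ⟨fun f => ∑ l, μ l * ∏ i, ξ i (f i) l, ?_, ?_, ?_⟩
    · intro f
      exact Finset.sum_nonneg fun l _ => mul_nonneg (h0 l)
        (Finset.prod_nonneg fun i _ => (h01 i (f i) l).1)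
    · rw [Finset.sum_comm]
      rw [← h1]
      refine Finset.sum_congr rfl fun l _ => ?_
      rw [← Finset.mul_sum, ← Fintype.prod_sum (fun i k => ξ i k l)]
      simp [hsum _ l]
    · intro S hS g
      rw [hm S hS g, Finset.sum_comm]
      refine Finset.sum_congr rfl fun l _ => ?_
      rw [← Finset.mul_sum,
        marg_lemma N K S g (fun i k => ξ i k l) (fun i => hsum i l)]
  exact ⟨⟨h12, fun h => h31 (h23 h)⟩, ⟨h23, fun h => h12 (h31 h)⟩⟩
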